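/- Suppose the data is exactly rational of degree (n,n): let p, q ∈ ℂ[X] have degree at most n, let ẑ_0, …, ẑ_n be pairwise distinct complex nodes with q(ẑ_k) ≠ 0 for all k, and set f_k = p(ẑ_k)/q(ẑ_k). Define b ∈ ℂ^{n+1} by b_k = q(ẑ_k) · ∏_{j≠k}(ẑ_k − ẑ_j)^{-1}. Then b ≠ 0, and for every ž ∈ ℂ with ž ≠ ẑ_k for all k and q(ž) ≠ 0, the Loewner residual vanishes: ∑_{k=0}^n b_k (p(ž)/q(ž) − f_k)(ž − ẑ_k)^{-1} = 0. Hence the Loewner matrix built from samples of a degree (n,n) rational function has a nontrivial kernel, and AAA can recover rational functions exactly. -/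

import Mathlib

/-- If the data come from an exact degree `(n,n)` rational function `p/q` sampled at `n+1`
distinct nodes `zh k` (with `q (zh k) ≠ 0`), then the coefficient vector
`b k = q(zh k) * (∏_{j ≠ k} (zh k - zh j))⁻¹` is nonzero and annihilates the Loewner residual:
for every point `zc` distinct from the nodes with `q(zc) ≠ 0`,
`∑ k, b k * (p(zc)/q(zc) - f k) * (zc - zh k)⁻¹ = 0`. Hence the Loewner matrix built from
samples of a degree `(n,n)` rational function has a nontrivial kernel. -/
theorem loewner_nontrivial_kernel_of_rational_data (n : ℕ) (p q : Polynomial ℂ)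
    (hp : p.degree ≤ n) (hq : q.degree ≤ n)
    (zh : Fin (n + 1) → ℂ) (hzh : Function.Injective zh)
    (hqz : ∀ k, q.eval (zh k) ≠ 0)
    (f : Fin (n + 1) → ℂ) (hf : ∀ k, f k = p.eval (zh k) / q.eval (zh k))
    (b : Fin (n + 1) → ℂ)
    (hb : ∀ k, b k = q.eval (zh k) * (∏ j ∈ Finset.univ.erase k, (zh k - zh j))⁻¹) :
    b ≠ 0 ∧
      ∀ zc : ℂ, (∀ k, zc ≠ zh k) → q.eval zc ≠ 0 →
        ∑ k, b k * (p.eval zc / q.eval zc - f k) * (zc - zh k)⁻¹ = 0 := by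
  have hW : ∀ k : Fin (n + 1), (∏ j ∈ Finset.univ.erase k, (zh k - zh j)) ≠ 0 := by
    intro k
    refine Finset.prod_ne_zero_iff.mpr fun j hj => sub_ne_zero.mpr fun h => ?_
    exact (Finset.mem_erase.mp hj).1 (hzh h).symm
  constructor
  · intro h0
    have : b 0 = 0 := by rw [h0]; rfl
    rw [hb 0] at this
    exact (mul_ne_zero (hqz 0) (inv_ne_zero (hW 0))) this
  · intro zc hzc hqc
    -- The key polynomial: vanishes at zc, degree ≤ n.
    set P : Polynomial ℂ :=
      Polynomial.C (p.eval zc) * q - Polynomial.C (q.eval zc) * p with hP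
    have hinj : Set.InjOn zh (Finset.univ : Finset (Fin (n + 1))) :=
      fun a _ c _ h => hzh h
    have hdeg : P.degree < (Finset.univ : Finset (Fin (n + 1))).card := by
      simp only [Finset.card_univ, Fintype.card_fin]
      refine lt_of_le_of_lt (Polynomial.degree_sub_le _ _) ?_
      have h1 : (Polynomial.C (p.eval zc) * q).degree ≤ (n : WithBot ℕ) := by
        refine le_trans (Polynomial.degree_mul_le _ _) ?_
        calc (Polynomial.C (p.eval zc)).degree + q.degree ≤ 0 + (n : WithBot ℕ) :=
              add_le_add Polynomial.degree_C_le hq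
          _ = (n : WithBot ℕ) := zero_add _
      have h2 : (Polynomial.C (q.eval zc) * p).degree ≤ (n : WithBot ℕ) := by
        refine le_trans (Polynomial.degree_mul_le _ _) ?_
        calc (Polynomial.C (q.eval zc)).degree + p.degree ≤ 0 + (n : WithBot ℕ) :=
              add_le_add Polynomial.degree_C_le hp
          _ = (n : WithBot ℕ) := zero_add _
      refine lt_of_le_of_lt (max_le h1 h2) ?_
      exact_mod_cast WithBot.coe_lt_coe.mpr (Nat.lt_succ_self n)
    have hinterp := Lagrange.eq_interpolate (f := P) hinj hdeg
    have hPzC : P.eval zc = 0 := by simp [hP]; ring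
    have hkey : (0 : ℂ) = ∑ k, P.eval (zh k) *
        ∏ j ∈ Finset.univ.erase k, ((zh k - zh j)⁻¹ * (zc - zh j)) := by
      calc (0 : ℂ) = P.eval zc := hPzC.symm
        _ = (Lagrange.interpolate Finset.univ zh fun i => P.eval (zh i)).eval zc := by
            rw [← hinterp]
        _ = _ := by
            rw [Lagrange.interpolate_apply]
            rw [Polynomial.eval_finset_sum]
            refine Finset.sum_congr rfl fun k _ => ?_
            rw [Polynomial.eval_mul, Polynomial.eval_C, Lagrange.basis,
              Polynomial.eval_prod]
            congr 1
            refine Finset.prod_congr rfl fun j _ => ?_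
            simp [Lagrange.basisDivisor]
    have hD : ∀ j : Fin (n + 1), zc - zh j ≠ 0 := fun j => sub_ne_zero.mpr (hzc j)
    have hE : ∀ k : Fin (n + 1), (∏ j ∈ Finset.univ.erase k, (zc - zh j)) ≠ 0 :=
      fun k => Finset.prod_ne_zero_iff.mpr fun j _ => hD j
    have aux : ∀ (A Qc Pc Pk W E d : ℂ), A ≠ 0 → Qc ≠ 0 → W ≠ 0 → E ≠ 0 → d ≠ 0 →
        A * W⁻¹ * (Pc / Qc - Pk / A) * d⁻¹ =
        (Qc⁻¹ * (d * E)⁻¹) * ((Pc * A - Qc * Pk) * (W⁻¹ * E)) := by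
      intro A Qc Pc Pk W E d hA hQc hWne hEne hd
      field_simp
    have hterm : ∀ k : Fin (n + 1),
        b k * (p.eval zc / q.eval zc - f k) * (zc - zh k)⁻¹ =
        ((q.eval zc)⁻¹ * (∏ j, (zc - zh j))⁻¹) * (P.eval (zh k) *
          ∏ j ∈ Finset.univ.erase k, ((zh k - zh j)⁻¹ * (zc - zh j))) := by
      intro k
      have hDk : (∏ j, (zc - zh j)) =
          (zc - zh k) * ∏ j ∈ Finset.univ.erase k, (zc - zh j) :=
        (Finset.mul_prod_erase _ _ (Finset.mem_univ k)).symm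
      rw [hb k, hf k, hDk, Finset.prod_mul_distrib, Finset.prod_inv_distrib]
      simp only [hP, Polynomial.eval_sub, Polynomial.eval_mul, Polynomial.eval_C]
      exact aux _ _ _ _ _ _ _ (hqz k) hqc (hW k) (hE k) (hD k)
    rw [Finset.sum_congr rfl fun k _ => hterm k, ← Finset.mul_sum, ← hkey, mul_zero]
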